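/- Let a and b be relatively prime positive integers. Then ∑_{m=0}^{a−1} ⌊m·b/a⌋² = (b² + 1)(a − 1)(2a − 1)/(6a) − 2b·s(b,a) − b(a − 1)/2. -/

import Mathlib

/-- The sawtooth function `((x))`. -/
noncomputable def sawtooth (x : ℝ) : ℝ := if Int.fract x = 0 then 0 else Int.fract x - 1/2

/-- The classical Dedekind sum `s(a,b)`. -/
noncomputable def dedekindSum (a b : ℕ) : ℝ :=
  ∑ k ∈ Finset.range b, sawtooth ((k : ℝ) * a / b) * sawtooth ((k : ℝ) / b)

private lemma key_inv (a : ℕ) {x y : ℕ} (hxy : x * y % a = 1) {m : ℕ} (hm : m < a) :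
    m * x % a * y % a = m := by
  calc m * x % a * y % a = m * x * y % a := by rw [Nat.mod_mul_mod]
    _ = m * (x * y) % a := by rw [mul_assoc]
    _ = m % a * (x * y % a) % a := by rw [Nat.mul_mod]
    _ = m := by rw [hxy, mul_one, Nat.mod_mod, Nat.mod_eq_of_lt hm]

private lemma reindex (a b : ℕ) (ha : 0 < a) (hab : Nat.Coprime a b) (f : ℕ → ℝ) :
    ∑ m ∈ Finset.range a, f (m * b % a) = ∑ m ∈ Finset.range a, f m := by
  rcases eq_or_lt_of_le (show 1 ≤ a from ha) with h1 | h1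
  · simp [← h1]
  obtain ⟨c, -, hc⟩ := Nat.exists_mul_mod_eq_one_of_coprime hab.symm h1
  have hc' : c * b % a = 1 := by rwa [mul_comm] at hc
  refine Finset.sum_nbij' (fun m => m * b % a) (fun m => m * c % a) ?_ ?_ ?_ ?_ ?_
  · intro m hm; exact Finset.mem_range.2 (Nat.mod_lt _ ha)
  · intro m hm; exact Finset.mem_range.2 (Nat.mod_lt _ ha)
  · intro m hm; exact key_inv a hc (Finset.mem_range.1 hm)
  · intro m hm; exact key_inv a hc' (Finset.mem_range.1 hm)
  · intro m hm; rfl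

private lemma sum_sq_real (n : ℕ) :
    ∑ m ∈ Finset.range n, (m:ℝ)^2 = n*((n:ℝ)-1)*(2*n-1)/6 := by
  induction n with
  | zero => simp
  | succ k ih => rw [Finset.sum_range_succ, ih]; push_cast; ring

private lemma sum_id_real (n : ℕ) : ∑ m ∈ Finset.range n, (m:ℝ) = n*((n:ℝ)-1)/2 := by
  induction n with
  | zero => simp
  | succ k ih => rw [Finset.sum_range_succ, ih]; push_cast; ring

private lemma saw1 {k a : ℕ} (hk : 0 < k) (hka : k < a) :
    sawtooth ((k:ℝ)/a) = (k:ℝ)/a - 1/2 := by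
  have ha : (0:ℝ) < a := by exact_mod_cast hk.trans hka
  have h1 : (0:ℝ) < (k:ℝ)/a := by positivity
  have h2 : (k:ℝ)/a < 1 := by
    rw [div_lt_one ha]; exact_mod_cast hka
  rw [sawtooth, Int.fract_eq_self.2 ⟨h1.le, h2⟩, if_neg h1.ne']

private lemma saw2 {k a b : ℕ} (ha : 0 < a) (hab : Nat.Coprime a b) (hk : 0 < k) (hka : k < a) :
    sawtooth ((k:ℝ)*b/a) = ((k*b % a : ℕ):ℝ)/a - 1/2 := by
  have har : (0:ℝ) < a := by exact_mod_cast ha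
  have hdiv : (k:ℝ)*b/a = ((k*b/a : ℕ):ℝ) + ((k*b % a : ℕ):ℝ)/a := by
    have h := Nat.div_add_mod (k*b) a
    have hcast : (k:ℝ)*b = a*((k*b/a : ℕ):ℝ) + ((k*b % a : ℕ):ℝ) := by exact_mod_cast h.symm
    rw [hcast, add_div, mul_div_cancel_left₀ _ har.ne']
  have hrpos : 0 < k*b % a := by
    rcases Nat.eq_zero_or_pos (k*b % a) with h | h
    · exfalso
      have hdvd : a ∣ k * b := Nat.dvd_of_mod_eq_zero h
      have : a ∣ k := hab.dvd_of_dvd_mul_right hdvd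
      exact absurd (Nat.le_of_dvd hk this) (not_le.2 hka)
    · exact h
  have hrlt : k*b % a < a := Nat.mod_lt _ ha
  have h1 : (0:ℝ) < ((k*b % a : ℕ):ℝ)/a := by
    have : (0:ℝ) < ((k*b % a : ℕ):ℝ) := by exact_mod_cast hrpos
    positivity
  have h2 : ((k*b % a : ℕ):ℝ)/a < 1 := by
    rw [div_lt_one har]; exact_mod_cast hrlt
  rw [sawtooth, hdiv, Int.fract_natCast_add, Int.fract_eq_self.2 ⟨h1.le, h2⟩, if_neg h1.ne']

theorem sum_floor_sq_eq (a b : ℕ) (ha : 0 < a) (hb : 0 < b) (hab : Nat.Coprime a b) :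
    ∑ m ∈ Finset.range a, ((m * b / a : ℕ) : ℝ) ^ 2
      = ((b : ℝ) ^ 2 + 1) * ((a : ℝ) - 1) * (2 * (a : ℝ) - 1) / (6 * a)
        - 2 * b * dedekindSum b a - (b : ℝ) * ((a : ℝ) - 1) / 2 := by
  have har : (0:ℝ) < a := by exact_mod_cast ha
  have ha0 : (a:ℝ) ≠ 0 := har.ne'
  have hq : ∀ m : ℕ, ((m*b/a : ℕ):ℝ) * a = (m:ℝ)*b - ((m*b%a : ℕ):ℝ) := by
    intro m
    have h := Nat.div_add_mod (m*b) a
    have hcast : (m:ℝ)*b = (a:ℝ)*((m*b/a : ℕ):ℝ) + ((m*b%a : ℕ):ℝ) := by exact_mod_cast h.symm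
    linarith
  -- sums
  have hS2 : ∑ m ∈ Finset.range a, (m:ℝ)^2 = (a:ℝ)*((a:ℝ)-1)*(2*(a:ℝ)-1)/6 := sum_sq_real a
  have hS1 : ∑ m ∈ Finset.range a, (m:ℝ) = (a:ℝ)*((a:ℝ)-1)/2 := sum_id_real a
  have hR2 : ∑ m ∈ Finset.range a, ((m*b%a : ℕ):ℝ)^2 = (a:ℝ)*((a:ℝ)-1)*(2*(a:ℝ)-1)/6 := by
    rw [reindex a b ha hab (fun n => (n:ℝ)^2)]; exact hS2
  have hR1 : ∑ m ∈ Finset.range a, ((m*b%a : ℕ):ℝ) = (a:ℝ)*((a:ℝ)-1)/2 := by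
    rw [reindex a b ha hab (fun n => (n:ℝ))]; exact hS1
  set T : ℝ := ∑ m ∈ Finset.range a, (m:ℝ) * ((m*b%a : ℕ):ℝ) with hT
  -- key1
  have key1 : (∑ m ∈ Finset.range a, ((m*b/a : ℕ):ℝ)^2) * (a:ℝ)^2
      = (b:ℝ)^2 * ((a:ℝ)*((a:ℝ)-1)*(2*(a:ℝ)-1)/6) - 2*b*T
        + (a:ℝ)*((a:ℝ)-1)*(2*(a:ℝ)-1)/6 := by
    rw [Finset.sum_mul]
    calc ∑ m ∈ Finset.range a, ((m*b/a : ℕ):ℝ)^2 * (a:ℝ)^2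
        = ∑ m ∈ Finset.range a,
            ((b:ℝ)^2*(m:ℝ)^2 - 2*b*((m:ℝ)*((m*b%a : ℕ):ℝ)) + ((m*b%a : ℕ):ℝ)^2) := by
          refine Finset.sum_congr rfl fun m _ => ?_
          have h := hq m
          linear_combination (((m*b/a : ℕ):ℝ)*a + (m:ℝ)*b - ((m*b%a : ℕ):ℝ)) * h
      _ = (b:ℝ)^2 * (∑ m ∈ Finset.range a, (m:ℝ)^2) - 2*b*T
            + ∑ m ∈ Finset.range a, ((m*b%a : ℕ):ℝ)^2 := by
          rw [Finset.sum_add_distrib, Finset.sum_sub_distrib, ← Finset.mul_sum, ← Finset.mul_sum]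
      _ = _ := by rw [hS2, hR2]
  -- Dedekind part
  have hD : dedekindSum b a + 1/4
      = ∑ m ∈ Finset.range a, (((m*b%a : ℕ):ℝ)/a - 1/2) * ((m:ℝ)/a - 1/2) := by
    obtain ⟨c, rfl⟩ : ∃ c, a = c + 1 := ⟨a - 1, by omega⟩
    rw [dedekindSum, Finset.sum_range_succ', Finset.sum_range_succ']
    have h0l : sawtooth ((0:ℕ) * (b:ℝ) / (c+1:ℕ)) * sawtooth (((0:ℕ):ℝ) / (c+1:ℕ)) = 0 := by
      norm_num [sawtooth]
    have h0r : (((0*b%(c+1) : ℕ):ℝ)/((c+1:ℕ):ℝ) - 1/2) * (((0:ℕ):ℝ)/((c+1:ℕ):ℝ) - 1/2)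
        = 1/4 := by
      norm_num
    rw [h0l, h0r, add_zero]
    congr 1
    refine Finset.sum_congr rfl fun k hk => ?_
    have hk1 : 0 < k + 1 := Nat.succ_pos k
    have hk2 : k + 1 < c + 1 := by simpa using Finset.mem_range.1 hk
    rw [saw1 hk1 hk2, saw2 ha hab hk1 hk2, mul_comm]
  have key2 : (dedekindSum b a + 1/4) * (a:ℝ)^2
      = T - ((a:ℝ)/2) * ((a:ℝ)*((a:ℝ)-1)/2) - ((a:ℝ)/2) * ((a:ℝ)*((a:ℝ)-1)/2)
        + (a:ℝ) * ((a:ℝ)^2/4) := by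
    rw [hD, Finset.sum_mul]
    calc ∑ m ∈ Finset.range a, (((m*b%a : ℕ):ℝ)/a - 1/2) * ((m:ℝ)/a - 1/2) * (a:ℝ)^2
        = ∑ m ∈ Finset.range a,
            ((m:ℝ)*((m*b%a : ℕ):ℝ) - ((a:ℝ)/2)*(m:ℝ) - ((a:ℝ)/2)*((m*b%a : ℕ):ℝ)
              + (a:ℝ)^2/4) := by
          refine Finset.sum_congr rfl fun m _ => ?_
          field_simp
          ring
      _ = T - ((a:ℝ)/2) * (∑ m ∈ Finset.range a, (m:ℝ))
            - ((a:ℝ)/2) * (∑ m ∈ Finset.range a, ((m*b%a : ℕ):ℝ)) + (a:ℝ) * ((a:ℝ)^2/4) := by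
          rw [Finset.sum_add_distrib, Finset.sum_sub_distrib, Finset.sum_sub_distrib,
            ← Finset.mul_sum, ← Finset.mul_sum, Finset.sum_const, Finset.card_range]
          ring
      _ = _ := by rw [hS1, hR1]
  -- combine
  have hTval : T = (dedekindSum b a + 1/4) * (a:ℝ)^2 + ((a:ℝ)/2)*((a:ℝ)*((a:ℝ)-1)/2)
      + ((a:ℝ)/2)*((a:ℝ)*((a:ℝ)-1)/2) - (a:ℝ)*((a:ℝ)^2/4) := by linear_combination -key2
  have ha2 : ((a:ℝ)^2) ≠ 0 := pow_ne_zero _ ha0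
  calc ∑ m ∈ Finset.range a, ((m*b/a : ℕ):ℝ)^2
      = ((∑ m ∈ Finset.range a, ((m*b/a : ℕ):ℝ)^2) * (a:ℝ)^2) / (a:ℝ)^2 := by
        field_simp
    _ = ((b:ℝ)^2 * ((a:ℝ)*((a:ℝ)-1)*(2*(a:ℝ)-1)/6) - 2*b*T
          + (a:ℝ)*((a:ℝ)-1)*(2*(a:ℝ)-1)/6) / (a:ℝ)^2 := by rw [key1]
    _ = _ := by
        rw [hTval]
        field_simp
        ring
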